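/- Let p ∈ M₂(C(S²)) be the Bott projection on the 2-sphere. Then 1_{C(S²)} ≾ p ⊕ p in M₄(C(S²)); that is, the trivial rank-one projection is Murray–von Neumann subequivalent to the direct sum of two copies of the Bott projection. -/

import Mathlib

/-- The Bott projection on the 2-sphere `S² ⊆ ℝ³`, as a `2 × 2` matrix of functions:
`p(x,y,z) = ½ [[1+z, x-iy], [x+iy, 1-z]]`. -/
noncomputable def bottProjection (v : Metric.sphere (0 : EuclideanSpace ℝ (Fin 3)) 1) :
    Matrix (Fin 2) (Fin 2) ℂ :=
  (2⁻¹ : ℂ) •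
    !![1 + ((v : EuclideanSpace ℝ (Fin 3)) 2 : ℂ),
        ((v : EuclideanSpace ℝ (Fin 3)) 0 : ℂ) - Complex.I * ((v : EuclideanSpace ℝ (Fin 3)) 1 : ℂ);
      ((v : EuclideanSpace ℝ (Fin 3)) 0 : ℂ) + Complex.I * ((v : EuclideanSpace ℝ (Fin 3)) 1 : ℂ),
        1 - ((v : EuclideanSpace ℝ (Fin 3)) 2 : ℂ)]

noncomputable def sVec (w : Metric.sphere (0 : EuclideanSpace ℝ (Fin 3)) 1) : Fin 4 → ℂ :=
  ![(2⁻¹ : ℂ) * (1 + ((w : EuclideanSpace ℝ (Fin 3)) 2 : ℂ)),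
    (2⁻¹ : ℂ) * (((w : EuclideanSpace ℝ (Fin 3)) 0 : ℂ) + Complex.I * ((w : EuclideanSpace ℝ (Fin 3)) 1 : ℂ)),
    (2⁻¹ : ℂ) * (((w : EuclideanSpace ℝ (Fin 3)) 0 : ℂ) - Complex.I * ((w : EuclideanSpace ℝ (Fin 3)) 1 : ℂ)),
    (2⁻¹ : ℂ) * (1 - ((w : EuclideanSpace ℝ (Fin 3)) 2 : ℂ))]

noncomputable def Vmat (w : Metric.sphere (0 : EuclideanSpace ℝ (Fin 3)) 1) :
    Matrix (Fin 4) (Fin 4) ℂ :=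
  Matrix.of fun i j => sVec w i * ![1, 0, 0, 0] j

lemma coord_cont (i : Fin 3) :
    Continuous fun w : Metric.sphere (0 : EuclideanSpace ℝ (Fin 3)) 1 =>
      ((w : EuclideanSpace ℝ (Fin 3)) i : ℂ) :=
  Complex.continuous_ofReal.comp ((EuclideanSpace.proj i).continuous.comp continuous_subtype_val)

lemma sphere_sq (w : Metric.sphere (0 : EuclideanSpace ℝ (Fin 3)) 1) :
    ((w : EuclideanSpace ℝ (Fin 3)) 0 : ℂ)^2 + ((w : EuclideanSpace ℝ (Fin 3)) 1 : ℂ)^2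
      + ((w : EuclideanSpace ℝ (Fin 3)) 2 : ℂ)^2 = 1 := by
  have h : ‖(w : EuclideanSpace ℝ (Fin 3))‖ = 1 := by
    have := w.2; simpa [mem_sphere_iff_norm] using this
  rw [EuclideanSpace.norm_eq] at h
  have h2 := Real.sqrt_eq_one.mp h
  have h3 : ((w : EuclideanSpace ℝ (Fin 3)) 0)^2 + ((w : EuclideanSpace ℝ (Fin 3)) 1)^2
      + ((w : EuclideanSpace ℝ (Fin 3)) 2)^2 = 1 := by
    simpa [Fin.sum_univ_three, Real.norm_eq_abs, sq_abs] using h2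
  have h4 := congrArg (Complex.ofReal) h3
  push_cast at h4
  exact h4

lemma sVec_cont (i : Fin 4) : Continuous fun w => sVec w i := by
  fin_cases i <;>
    simp only [sVec, Matrix.cons_val_zero, Matrix.cons_val_one, Matrix.head_cons,
      Matrix.cons_val_two, Matrix.tail_cons, Matrix.cons_val_three] <;>
    first
      | exact continuous_const.mul (continuous_const.add (coord_cont 2))
      | exact continuous_const.mul (continuous_const.sub (coord_cont 2))
      | exact continuous_const.mul ((coord_cont 0).add (continuous_const.mul (coord_cont 1)))
      | exact continuous_const.mul ((coord_cont 0).sub (continuous_const.mul (coord_cont 1)))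

set_option maxHeartbeats 2000000 in
lemma QV (w : Metric.sphere (0 : EuclideanSpace ℝ (Fin 3)) 1) :
    (Matrix.reindex finSumFinEquiv finSumFinEquiv
      (Matrix.fromBlocks (bottProjection w) 0 0 (bottProjection w)) : Matrix (Fin 4) (Fin 4) ℂ)
      * Vmat w = Vmat w := by
  have h := sphere_sq w
  have e0 : (finSumFinEquiv (m := 2) (n := 2)).symm (0 : Fin 4) = Sum.inl 0 := by decide
  have e1 : (finSumFinEquiv (m := 2) (n := 2)).symm (1 : Fin 4) = Sum.inl 1 := by decide
  have e2 : (finSumFinEquiv (m := 2) (n := 2)).symm (2 : Fin 4) = Sum.inr 0 := by decide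
  have e3 : (finSumFinEquiv (m := 2) (n := 2)).symm (3 : Fin 4) = Sum.inr 1 := by decide
  ext i j
  fin_cases i <;> fin_cases j <;>
    simp [Vmat, sVec, bottProjection, Matrix.mul_apply, Fin.sum_univ_four, e0, e1, e2, e3] <;>
    first
      | linear_combination (1/4 : ℂ) * h -
          ((((w : EuclideanSpace ℝ (Fin 3)) 1 : ℂ))^2/4) * Complex.I_sq
      | ring

set_option maxHeartbeats 2000000 in
/-- `1_{C(S²)} ≾ p ⊕ p` in `M₄(C(S²))`: the trivial rank-one projection is Murray–von
Neumann subequivalent to the direct sum of two copies of the Bott projection, i.e. there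
is a continuous `4 × 4`-matrix-valued partial isometry `V` with `V*V = diag(1,0,0,0)`
and `VV* ≤ p ⊕ p`. -/
theorem stmt_13 :
    ∃ V : Metric.sphere (0 : EuclideanSpace ℝ (Fin 3)) 1 → Matrix (Fin 4) (Fin 4) ℂ,
      Continuous V ∧
      (∀ w, star (V w) * V w = Matrix.diagonal ![1, 0, 0, 0]) ∧
      (∀ w, (Matrix.reindex finSumFinEquiv finSumFinEquiv
            (Matrix.fromBlocks (bottProjection w) 0 0 (bottProjection w)) : Matrix (Fin 4) (Fin 4) ℂ)
          * (V w * star (V w)) = V w * star (V w)) := by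
  refine ⟨Vmat, ?_, ?_, fun w => by rw [← Matrix.mul_assoc, QV w]⟩
  · apply continuous_matrix
    intro i j
    exact ((sVec_cont i).mul continuous_const)
  · intro w
    have h := sphere_sq w
    ext i j
    fin_cases i <;> fin_cases j <;>
      simp [Vmat, sVec, Matrix.mul_apply, Matrix.star_apply, Fin.sum_univ_four,
        Matrix.diagonal, Complex.conj_ofReal, map_ofNat, map_inv₀] <;>
      first
        | linear_combination (1/2 : ℂ) * h -
            ((((w : EuclideanSpace ℝ (Fin 3)) 1 : ℂ))^2/2) * Complex.I_sq
        | ring
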